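/- Let ψ: ℝ^d → ℂ be an additive character ψ(t) = e^{i a·t}, T > 0, H ∈ (0,T], x₀ ∈ X, f: X → ℂ bounded measurable, and u: ℝ^d → G a group homomorphism into a group acting on X on the right. Define μ_{T,ψ}(f) = (1/T^d)∫_{[0,T]^d} ψ(t)(f(x₀u(t)) − c) dt where c is a constant, and (f∗σ_H)(x) = (1/H^d)∫_{[0,H]^d} \overline{ψ(s)} f(x·u(s)^{-1}) ds. Then |μ_{T,ψ}(f) − μ_{T,ψ}(f∗σ_H)| ≤ (2‖f − c‖_∞ / (T^d H^d)) ∫_{[0,H]^d} |[0,T]^d △ ([0,T]^d − s)| ds ≤ C·(H/T)·‖f − c‖_∞ for a constant C depending only on d. -/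

import Mathlib

open MeasureTheory Set

noncomputable section

def Cube (d : ℕ) (S : ℝ) : Set (Fin d → ℝ) := {t | ∀ i, t i ∈ Icc 0 S}

lemma Cube_eq_pi (d : ℕ) (S : ℝ) : Cube d S = Set.pi univ (fun _ : Fin d => Icc 0 S) := by
  ext t; simp only [Cube, mem_setOf_eq, Set.mem_pi, Set.mem_univ, true_implies]

lemma measurableSet_Cube (d : ℕ) (S : ℝ) : MeasurableSet (Cube d S) := by
  rw [Cube_eq_pi]; exact MeasurableSet.univ_pi fun _ => measurableSet_Icc

lemma volume_Cube (d : ℕ) (S : ℝ) :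
    volume (Cube d S) = ENNReal.ofReal S ^ d := by
  rw [Cube_eq_pi, volume_pi_pi]
  simp [Real.volume_Icc]

lemma volume_Cube_ne_top (d : ℕ) (S : ℝ) : volume (Cube d S) ≠ ⊤ := by
  rw [volume_Cube d]; exact ENNReal.pow_ne_top ENNReal.ofReal_ne_top

lemma volume_Cube_toReal (d : ℕ) {S : ℝ} (hS : 0 ≤ S) :
    (volume (Cube d S)).toReal = S ^ d := by
  rw [volume_Cube d, ENNReal.toReal_pow, ENNReal.toReal_ofReal hS]

lemma image_sub_Cube (d : ℕ) (T : ℝ) (s : Fin d → ℝ) :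
    (fun t => t - s) '' Cube d T = Set.pi univ (fun i => Icc (0 - s i) (T - s i)) := by
  ext t
  constructor
  · rintro ⟨x, hx, rfl⟩
    intro i _
    have := hx i
    simp only [Pi.sub_apply, Set.mem_Icc]
    constructor <;> [linarith [this.1]; linarith [this.2]]
  · intro ht
    refine ⟨t + s, fun i => ?_, by ext i; simp⟩
    have := ht i (Set.mem_univ i)
    simp only [Set.mem_Icc] at this
    simp only [Pi.add_apply] at *
    constructor <;> linarith [this.1, this.2]

lemma measurableSet_image_sub_Cube (d : ℕ) (T : ℝ) (s : Fin d → ℝ) :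
    MeasurableSet ((fun t => t - s) '' Cube d T) := by
  rw [image_sub_Cube]; exact MeasurableSet.univ_pi fun _ => measurableSet_Icc

lemma volume_image_sub_Cube (d : ℕ) (T : ℝ) (s : Fin d → ℝ) :
    volume ((fun t => t - s) '' Cube d T) = ENNReal.ofReal T ^ d := by
  rw [image_sub_Cube, volume_pi_pi]
  have : ∀ i : Fin d, volume (Icc (0 - s i) (T - s i)) = ENNReal.ofReal T := by
    intro i; rw [Real.volume_Icc]; congr 1; ring
  simp [this]

lemma symmDiff_Cube_toReal (d : ℕ) {T H : ℝ} (hT : 0 < T) (hHT : H ≤ T) {s : Fin d → ℝ}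
    (hs : ∀ i, s i ∈ Icc (0:ℝ) H) :
    (volume (symmDiff (Cube d T) ((fun t => t - s) '' Cube d T))).toReal
      = 2 * (T ^ d - ∏ i, (T - s i)) := by
  have hAm : MeasurableSet (Cube d T) := measurableSet_Cube d T
  have hBm := measurableSet_image_sub_Cube d T s
  have hfac : ∀ i, 0 ≤ T - s i := fun i => by
    have := hs i; simp only [Set.mem_Icc] at this; linarith [this.1, this.2]
  have hAB : Cube d T ∩ (fun t => t - s) '' Cube d T
      = Set.pi univ (fun i => Icc 0 (T - s i)) := by
    rw [image_sub_Cube, Cube_eq_pi, ← Set.pi_inter_distrib]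
    apply Set.pi_congr rfl
    intro i _
    rw [Icc_inter_Icc]
    have h0 := (hs i).1
    have h1 : max 0 (0 - s i) = 0 := by rw [max_eq_left]; linarith
    have h2 : min T (T - s i) = T - s i := by rw [min_eq_right]; linarith
    rw [h1, h2]
  have hvA : volume (Cube d T) = ENNReal.ofReal T ^ d := volume_Cube d T
  have hvB := volume_image_sub_Cube d T s
  have hvAB : volume (Cube d T ∩ (fun t => t - s) '' Cube d T)
      = ∏ i, ENNReal.ofReal (T - s i) := by
    rw [hAB, volume_pi_pi]; simp [Real.volume_Icc]
  have hABle : volume (Cube d T ∩ (fun t => t - s) '' Cube d T) ≤ ENNReal.ofReal T ^ d := by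
    rw [← hvA]; exact measure_mono inter_subset_left
  have hfin : ENNReal.ofReal T ^ d ≠ ⊤ := ENNReal.pow_ne_top ENNReal.ofReal_ne_top
  have hABfin : volume (Cube d T ∩ (fun t => t - s) '' Cube d T) ≠ ⊤ :=
    fun h => hfin (top_le_iff.mp (h ▸ hABle))
  have hdAB : volume (Cube d T \ (fun t => t - s) '' Cube d T)
      = volume (Cube d T) - volume (Cube d T ∩ (fun t => t - s) '' Cube d T) := by
    rw [show Cube d T \ (fun t => t - s) '' Cube d T
        = Cube d T \ (Cube d T ∩ (fun t => t - s) '' Cube d T) by rw [Set.diff_self_inter]]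
    exact measure_diff inter_subset_left (hAm.inter hBm).nullMeasurableSet hABfin
  have hdBA : volume ((fun t => t - s) '' Cube d T \ Cube d T)
      = volume ((fun t => t - s) '' Cube d T)
        - volume (Cube d T ∩ (fun t => t - s) '' Cube d T) := by
    rw [show (fun t => t - s) '' Cube d T \ Cube d T
        = (fun t => t - s) '' Cube d T \ (Cube d T ∩ (fun t => t - s) '' Cube d T) by
      rw [Set.inter_comm, Set.diff_self_inter]]
    exact measure_diff (Set.inter_comm (Cube d T) _ ▸ inter_subset_left)
      (hAm.inter hBm).nullMeasurableSet hABfin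
  have hsymm : volume (symmDiff (Cube d T) ((fun t => t - s) '' Cube d T))
      = volume (Cube d T \ (fun t => t - s) '' Cube d T)
        + volume ((fun t => t - s) '' Cube d T \ Cube d T) := by
    rw [Set.symmDiff_def]
    exact measure_union disjoint_sdiff_sdiff (hBm.diff hAm)
  have hfinAB : volume (Cube d T \ (fun t => t - s) '' Cube d T) ≠ ⊤ := by
    rw [hdAB, hvA]; exact ((tsub_le_self).trans_lt hfin.lt_top).ne
  have hfinBA : volume ((fun t => t - s) '' Cube d T \ Cube d T) ≠ ⊤ := by
    rw [hdBA, hvB]; exact ((tsub_le_self).trans_lt hfin.lt_top).ne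
  rw [hsymm, ENNReal.toReal_add hfinAB hfinBA, hdAB, hdBA, hvA, hvB,
    ENNReal.toReal_sub_of_le hABle hfin]
  rw [hvAB, ENNReal.toReal_prod, ENNReal.toReal_pow, ENNReal.toReal_ofReal hT.le]
  have : ∀ i : Fin d, (ENNReal.ofReal (T - s i)).toReal = T - s i := fun i =>
    ENNReal.toReal_ofReal (hfac i)
  rw [Finset.prod_congr rfl fun i _ => this i]
  ring

lemma Cube_def (d : ℕ) (S : ℝ) : Cube d S = {t | ∀ i, t i ∈ Icc 0 S} := rfl

lemma aux_prod_bound {ι : Type*} [DecidableEq ι] (T H : ℝ) (hT : 0 ≤ T) (hHT : H ≤ T)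
    (s : ι → ℝ) :
    ∀ F : Finset ι, (∀ i ∈ F, 0 ≤ s i ∧ s i ≤ H) →
      T ^ F.card - ∏ i ∈ F, (T - s i) ≤ F.card * T ^ (F.card - 1) * H := by
  intro F
  induction F using Finset.induction_on with
  | empty => intro _; simp
  | @insert a F ha ih =>
    intro hs
    have hsa := hs a (Finset.mem_insert_self a F)
    have hH0 : 0 ≤ H := le_trans hsa.1 hsa.2
    have hsF : ∀ i ∈ F, 0 ≤ s i ∧ s i ≤ H := fun i hi => hs i (Finset.mem_insert_of_mem hi)
    have hfac : ∀ i ∈ F, 0 ≤ T - s i := fun i hi => by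
      have := hsF i hi; linarith [this.1, this.2]
    have hP0 : 0 ≤ ∏ i ∈ F, (T - s i) := Finset.prod_nonneg hfac
    have hPT : ∏ i ∈ F, (T - s i) ≤ T ^ F.card := by
      calc ∏ i ∈ F, (T - s i) ≤ ∏ _i ∈ F, T :=
            Finset.prod_le_prod hfac (fun i hi => by linarith [(hsF i hi).1])
        _ = T ^ F.card := by rw [Finset.prod_const]
    have ih' := ih hsF
    rw [Finset.prod_insert ha, Finset.card_insert_of_notMem ha]
    set n := F.card with hn
    have h1 : T * (T ^ n - ∏ i ∈ F, (T - s i)) ≤ T * (n * T ^ (n - 1) * H) :=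
      mul_le_mul_of_nonneg_left ih' hT
    have h2 : s a * ∏ i ∈ F, (T - s i) ≤ H * T ^ n := mul_le_mul hsa.2 hPT hP0 hH0
    have h3 : (n : ℝ) * (T * T ^ (n - 1)) = n * T ^ n := by
      rcases n with _ | m
      · simp
      · simp only [Nat.add_sub_cancel]
        rw [← pow_succ']
    have hcard : n + 1 - 1 = n := by omega
    rw [hcard]
    push_cast
    calc T ^ (n + 1) - (T - s a) * ∏ i ∈ F, (T - s i)
        = T * (T ^ n - ∏ i ∈ F, (T - s i)) + s a * ∏ i ∈ F, (T - s i) := by ring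
      _ ≤ T * (n * T ^ (n - 1) * H) + H * T ^ n := add_le_add h1 h2
      _ = (n : ℝ) * (T * T ^ (n - 1)) * H + T ^ n * H := by ring
      _ = (n : ℝ) * T ^ n * H + T ^ n * H := by rw [h3]
      _ = ((n : ℝ) + 1) * T ^ n * H := by ring

lemma aux_main (d : ℕ) (hd : 1 ≤ d) {T H : ℝ} (hT : 0 < T) (hH : 0 < H) (hHT : H ≤ T)
    (g : (Fin d → ℝ) → ℂ) (M : ℝ) (hM : 0 ≤ M) (hgm : Measurable g) (hgb : ∀ t, ‖g t‖ ≤ M) :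
    ‖((T ^ d : ℝ)⁻¹ • ∫ t in Cube d T, g t) -
      (T ^ d : ℝ)⁻¹ • ∫ t in Cube d T, (H ^ d : ℝ)⁻¹ • ∫ s in Cube d H, g (t - s)‖
      ≤ (2 * M / (T ^ d * H ^ d)) * (∫ s in Cube d H,
          (volume (symmDiff (Cube d T) ((fun t => t - s) '' Cube d T))).toReal) ∧
    ‖((T ^ d : ℝ)⁻¹ • ∫ t in Cube d T, g t) -
      (T ^ d : ℝ)⁻¹ • ∫ t in Cube d T, (H ^ d : ℝ)⁻¹ • ∫ s in Cube d H, g (t - s)‖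
      ≤ ((4 * d : ℝ)) * (H / T) * M := by
  haveI instT : IsFiniteMeasure (volume.restrict (Cube d T)) :=
    ⟨by rw [Measure.restrict_apply_univ]; exact (volume_Cube_ne_top d T).lt_top⟩
  haveI instH : IsFiniteMeasure (volume.restrict (Cube d H)) :=
    ⟨by rw [Measure.restrict_apply_univ]; exact (volume_Cube_ne_top d H).lt_top⟩
  have hgi : ∀ A : Set (Fin d → ℝ), volume A ≠ ⊤ → IntegrableOn g A := by
    intro A hA
    haveI : IsFiniteMeasure (volume.restrict A) :=
      ⟨by rw [Measure.restrict_apply_univ]; exact hA.lt_top⟩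
    exact Integrable.mono' (integrable_const M) hgm.aestronglyMeasurable (ae_of_all _ hgb)
  have hkey : ∀ s : Fin d → ℝ,
      ∫ t in Cube d T, g (t - s) = ∫ t in (fun t => t - s) '' Cube d T, g t := by
    intro s
    exact ((measurePreserving_sub_right volume s).setIntegral_image_emb
      (MeasurableEquiv.subRight s).measurableEmbedding g (Cube d T)).symm
  have hprod : Integrable (Function.uncurry fun t s : Fin d → ℝ => g (t - s))
      ((volume.restrict (Cube d T)).prod (volume.restrict (Cube d H))) := by
    apply Integrable.mono' (integrable_const M)
    · exact (hgm.comp (measurable_fst.sub measurable_snd)).aestronglyMeasurable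
    · exact ae_of_all _ fun p => hgb _
  have hswap : ∫ t in Cube d T, ∫ s in Cube d H, g (t - s)
      = ∫ s in Cube d H, ∫ t in Cube d T, g (t - s) := integral_integral_swap hprod
  have hFint : Integrable (fun s => ∫ t in Cube d T, g (t - s))
      (volume.restrict (Cube d H)) := hprod.integral_prod_right
  have hTd : (0:ℝ) < T ^ d := pow_pos hT d
  have hHd : (0:ℝ) < H ^ d := pow_pos hH d
  have e1 : (T ^ d : ℝ)⁻¹ • (∫ t in Cube d T, (H ^ d : ℝ)⁻¹ • ∫ s in Cube d H, g (t - s))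
      = ((T ^ d * H ^ d : ℝ))⁻¹ • ∫ s in Cube d H, ∫ t in Cube d T, g (t - s) := by
    rw [integral_smul, hswap, smul_smul, mul_inv]
  have e2 : (T ^ d : ℝ)⁻¹ • (∫ t in Cube d T, g t)
      = ((T ^ d * H ^ d : ℝ))⁻¹ • ∫ _s in Cube d H, (∫ t in Cube d T, g t) := by
    rw [integral_const, measureReal_restrict_apply_univ, measureReal_def, volume_Cube_toReal d hH.le, smul_smul]
    congr 1
    field_simp
  have e3 : ((T ^ d : ℝ)⁻¹ • ∫ t in Cube d T, g t) -
      (T ^ d : ℝ)⁻¹ • ∫ t in Cube d T, (H ^ d : ℝ)⁻¹ • ∫ s in Cube d H, g (t - s)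
      = ((T ^ d * H ^ d : ℝ))⁻¹ • ∫ s in Cube d H,
          ((∫ t in Cube d T, g t) - ∫ t in Cube d T, g (t - s)) := by
    rw [e2, e1, ← smul_sub, ← integral_sub (integrable_const _) hFint]
  have hdiff : ∀ s : Fin d → ℝ,
      ‖(∫ t in Cube d T, g t) - ∫ t in (fun t => t - s) '' Cube d T, g t‖
      ≤ M * (volume (symmDiff (Cube d T) ((fun t => t - s) '' Cube d T))).toReal := by
    intro s
    have hBm : MeasurableSet ((fun t => t - s) '' Cube d T) :=
      measurableSet_image_sub_Cube d T s
    have hAm := measurableSet_Cube d T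
    have hvB : volume ((fun t => t - s) '' Cube d T) ≠ ⊤ := by
      rw [volume_image_sub_Cube]; exact ENNReal.pow_ne_top ENNReal.ofReal_ne_top
    have hiA : IntegrableOn g (Cube d T) := hgi _ (volume_Cube_ne_top d T)
    have hiB : IntegrableOn g ((fun t => t - s) '' Cube d T) := hgi _ hvB
    have hsplitA := (integral_inter_add_diff hBm hiA).symm
    have hsplitB := (integral_inter_add_diff hAm hiB).symm
    have hcomm : (fun t => t - s) '' Cube d T ∩ Cube d T
        = Cube d T ∩ (fun t => t - s) '' Cube d T := inter_comm _ _
    have hfin1 : volume (Cube d T \ (fun t => t - s) '' Cube d T) ≠ ⊤ :=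
      fun h => volume_Cube_ne_top d T (top_le_iff.mp (h ▸ measure_mono diff_subset))
    have hfin2 : volume ((fun t => t - s) '' Cube d T \ Cube d T) ≠ ⊤ :=
      fun h => hvB (top_le_iff.mp (h ▸ measure_mono diff_subset))
    have hstep : (∫ t in Cube d T, g t) - ∫ t in (fun t => t - s) '' Cube d T, g t
        = (∫ t in Cube d T \ (fun t => t - s) '' Cube d T, g t)
          - ∫ t in (fun t => t - s) '' Cube d T \ Cube d T, g t := by
      rw [hsplitA, hsplitB, hcomm]; ring
    rw [hstep]
    have hb1 : ‖∫ t in Cube d T \ (fun t => t - s) '' Cube d T, g t‖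
        ≤ M * (volume (Cube d T \ (fun t => t - s) '' Cube d T)).toReal :=
      norm_setIntegral_le_of_norm_le_const hfin1.lt_top (fun x _ => hgb x)
    have hb2 : ‖∫ t in (fun t => t - s) '' Cube d T \ Cube d T, g t‖
        ≤ M * (volume ((fun t => t - s) '' Cube d T \ Cube d T)).toReal :=
      norm_setIntegral_le_of_norm_le_const hfin2.lt_top (fun x _ => hgb x)
    have hsymm : volume (symmDiff (Cube d T) ((fun t => t - s) '' Cube d T))
        = volume (Cube d T \ (fun t => t - s) '' Cube d T)
          + volume ((fun t => t - s) '' Cube d T \ Cube d T) := by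
      rw [Set.symmDiff_def]
      exact measure_union disjoint_sdiff_sdiff (hBm.diff hAm)
    calc ‖(∫ t in Cube d T \ (fun t => t - s) '' Cube d T, g t)
          - ∫ t in (fun t => t - s) '' Cube d T \ Cube d T, g t‖
        ≤ ‖∫ t in Cube d T \ (fun t => t - s) '' Cube d T, g t‖
          + ‖∫ t in (fun t => t - s) '' Cube d T \ Cube d T, g t‖ := norm_sub_le _ _
      _ ≤ M * (volume (Cube d T \ (fun t => t - s) '' Cube d T)).toReal
          + M * (volume ((fun t => t - s) '' Cube d T \ Cube d T)).toReal := add_le_add hb1 hb2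
      _ = M * (volume (symmDiff (Cube d T) ((fun t => t - s) '' Cube d T))).toReal := by
          rw [hsymm, ENNReal.toReal_add hfin1 hfin2]; ring
  have hbound_int : Integrable (fun s : Fin d → ℝ =>
      M * (volume (symmDiff (Cube d T) ((fun t => t - s) '' Cube d T))).toReal)
      (volume.restrict (Cube d H)) := by
    have hcont : Continuous fun s : Fin d → ℝ => M * (2 * (T ^ d - ∏ i, (T - s i))) := by
      apply continuous_const.mul
      apply continuous_const.mul
      exact continuous_const.sub (continuous_finset_prod _ fun i _ =>
        continuous_const.sub (continuous_apply i))
    have hcompact : IsCompact (Cube d H) := by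
      rw [Cube_eq_pi]; exact isCompact_univ_pi fun i => isCompact_Icc
    have h1 : IntegrableOn (fun s : Fin d → ℝ => M * (2 * (T ^ d - ∏ i, (T - s i))))
        (Cube d H) := hcont.continuousOn.integrableOn_compact hcompact
    apply h1.congr
    filter_upwards [ae_restrict_mem (measurableSet_Cube d H)] with s hs
    have hs' : ∀ i, s i ∈ Icc (0:ℝ) H := by rwa [Cube_def] at hs
    rw [symmDiff_Cube_toReal d hT hHT hs']
  have hnorm1 : ‖∫ s in Cube d H, ((∫ t in Cube d T, g t) - ∫ t in Cube d T, g (t - s))‖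
      ≤ ∫ s in Cube d H,
        M * (volume (symmDiff (Cube d T) ((fun t => t - s) '' Cube d T))).toReal := by
    apply norm_integral_le_of_norm_le hbound_int
    apply ae_of_all
    intro s
    rw [hkey s]
    exact hdiff s
  have hInonneg : 0 ≤ ∫ s in Cube d H,
      (volume (symmDiff (Cube d T) ((fun t => t - s) '' Cube d T))).toReal :=
    integral_nonneg fun s => ENNReal.toReal_nonneg
  have hmain1 : ‖((T ^ d : ℝ)⁻¹ • ∫ t in Cube d T, g t) -
      (T ^ d : ℝ)⁻¹ • ∫ t in Cube d T, (H ^ d : ℝ)⁻¹ • ∫ s in Cube d H, g (t - s)‖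
      ≤ (2 * M / (T ^ d * H ^ d)) * (∫ s in Cube d H,
          (volume (symmDiff (Cube d T) ((fun t => t - s) '' Cube d T))).toReal) := by
    rw [e3, norm_smul, Real.norm_eq_abs, abs_of_nonneg (by positivity)]
    calc (T ^ d * H ^ d : ℝ)⁻¹ * ‖∫ s in Cube d H,
            ((∫ t in Cube d T, g t) - ∫ t in Cube d T, g (t - s))‖
        ≤ (T ^ d * H ^ d : ℝ)⁻¹ * ∫ s in Cube d H,
            M * (volume (symmDiff (Cube d T) ((fun t => t - s) '' Cube d T))).toReal :=
          mul_le_mul_of_nonneg_left hnorm1 (by positivity)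
      _ = (M / (T ^ d * H ^ d)) * (∫ s in Cube d H,
            (volume (symmDiff (Cube d T) ((fun t => t - s) '' Cube d T))).toReal) := by
          rw [integral_const_mul]; ring
      _ ≤ (2 * M / (T ^ d * H ^ d)) * (∫ s in Cube d H,
            (volume (symmDiff (Cube d T) ((fun t => t - s) '' Cube d T))).toReal) := by
          apply mul_le_mul_of_nonneg_right _ hInonneg
          gcongr
          linarith
  refine ⟨hmain1, ?_⟩
  have hub : ∀ s ∈ Cube d H,
      (volume (symmDiff (Cube d T) ((fun t => t - s) '' Cube d T))).toReal
        ≤ 2 * (d * T ^ (d - 1) * H) := by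
    intro s hs
    have hs' : ∀ i, s i ∈ Icc (0:ℝ) H := by rwa [Cube_def] at hs
    rw [symmDiff_Cube_toReal d hT hHT hs']
    have h := aux_prod_bound T H hT.le hHT s Finset.univ
      (fun i _ => by have := hs' i; exact ⟨this.1, this.2⟩)
    rw [Finset.card_univ, Fintype.card_fin] at h
    linarith
  have hI2 : (∫ s in Cube d H,
      (volume (symmDiff (Cube d T) ((fun t => t - s) '' Cube d T))).toReal)
      ≤ H ^ d * (2 * (d * T ^ (d - 1) * H)) := by
    have step : (∫ s in Cube d H,
        (volume (symmDiff (Cube d T) ((fun t => t - s) '' Cube d T))).toReal)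
        ≤ ∫ _s in Cube d H, (2 * ((d : ℝ) * T ^ (d - 1) * H)) := by
      apply integral_mono_of_nonneg (ae_of_all _ fun s => ENNReal.toReal_nonneg)
        (integrable_const _)
      filter_upwards [ae_restrict_mem (measurableSet_Cube d H)] with s hs
      exact hub s hs
    calc (∫ s in Cube d H,
        (volume (symmDiff (Cube d T) ((fun t => t - s) '' Cube d T))).toReal)
        ≤ ∫ _s in Cube d H, (2 * ((d : ℝ) * T ^ (d - 1) * H)) := step
      _ = H ^ d * (2 * (d * T ^ (d - 1) * H)) := by
          rw [integral_const, measureReal_restrict_apply_univ, measureReal_def, volume_Cube_toReal d hH.le,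
            smul_eq_mul]
  have hfinal : (2 * M / (T ^ d * H ^ d)) * (H ^ d * (2 * (d * T ^ (d - 1) * H)))
      = (4 * d : ℝ) * (H / T) * M := by
    obtain ⟨k, hk⟩ : ∃ k, d = k + 1 := ⟨d - 1, by omega⟩
    subst hk
    simp only [Nat.add_sub_cancel]
    push_cast
    field_simp
    ring
  calc ‖((T ^ d : ℝ)⁻¹ • ∫ t in Cube d T, g t) -
      (T ^ d : ℝ)⁻¹ • ∫ t in Cube d T, (H ^ d : ℝ)⁻¹ • ∫ s in Cube d H, g (t - s)‖
      ≤ (2 * M / (T ^ d * H ^ d)) * (∫ s in Cube d H,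
          (volume (symmDiff (Cube d T) ((fun t => t - s) '' Cube d T))).toReal) := hmain1
    _ ≤ (2 * M / (T ^ d * H ^ d)) * (H ^ d * (2 * (d * T ^ (d - 1) * H))) :=
        mul_le_mul_of_nonneg_left hI2 (by positivity)
    _ = (4 * d : ℝ) * (H / T) * M := hfinal

/-- Comparing `μ_{T,ψ}(f)` with `μ_{T,ψ}(f∗σ_H)`: the difference is bounded by
`(2‖f-c‖_∞/(T^d H^d)) ∫_{[0,H]^d} |[0,T]^d ∆ ([0,T]^d - s)| ds ≤ C (H/T) ‖f-c‖_∞`,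
with `C` depending only on `d`. -/
theorem mu_convolution_comparison (d : ℕ) (hd : 1 ≤ d) :
    ∃ C : ℝ, 0 < C ∧
    ∀ {G X : Type} [Group G] (a : Fin d → ℝ) (T H : ℝ), 0 < T → 0 < H → H ≤ T →
    ∀ (u : (Fin d → ℝ) → G), (∀ s t, u (s + t) = u s * u t) →
    ∀ (ρ : X → G → X), (∀ x g h, ρ x (g * h) = ρ (ρ x g) h) →
    ∀ (x₀ : X) (f : X → ℂ) (c : ℂ) (M : ℝ), 0 ≤ M →
    (∀ x, ‖f x - c‖ ≤ M) →
    Measurable (fun t : Fin d → ℝ => f (ρ x₀ (u t))) →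
    -- the character, the cubes, `μ_{T,ψ}`, the convolution `f∗σ_H`, and
    -- `μ_{T,ψ}(f∗σ_H)` (whose subtracted constant is the convolution of `c`):
    (let ψ : (Fin d → ℝ) → ℂ := fun t => Complex.exp (Complex.I * ∑ i, a i * t i)
     let cube : ℝ → Set (Fin d → ℝ) := fun S => {t | ∀ i, t i ∈ Icc 0 S}
     let μT : ℂ := (T ^ d)⁻¹ • ∫ t in cube T, ψ t * (f (ρ x₀ (u t)) - c)
     let conv : X → ℂ := fun x =>
       (H ^ d)⁻¹ • ∫ s in cube H, (starRingEnd ℂ) (ψ s) * f (ρ x (u s)⁻¹)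
     let cH : ℂ := (H ^ d)⁻¹ • (∫ s in cube H, (starRingEnd ℂ) (ψ s)) * c
     let μTconv : ℂ := (T ^ d)⁻¹ • ∫ t in cube T, ψ t * (conv (ρ x₀ (u t)) - cH)
     ‖μT - μTconv‖ ≤ (2 * M / (T ^ d * H ^ d)) *
         ∫ s in cube H,
           (volume (symmDiff (cube T) ((fun t => t - s) '' cube T))).toReal ∧
       ‖μT - μTconv‖ ≤ C * (H / T) * M) := by
  refine ⟨4 * d, ?_, ?_⟩
  · have h1 : (1:ℝ) ≤ d := by exact_mod_cast hd
    linarith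
  intro G X _ a T H hT hH hHT u hu ρ hρ x₀ f c M hM hfb hfm
  intro ψ cube μT conv cH μTconv
  have hcube : cube = Cube d := by funext S; rw [Cube_def]
  haveI instH : IsFiniteMeasure (volume.restrict (Cube d H)) := by
    constructor
    rw [Measure.restrict_apply_univ]
    exact (volume_Cube_ne_top d H).lt_top
  -- character facts
  have hψm : Measurable ψ := by
    have hsum : Measurable fun t : Fin d → ℝ => (∑ i, a i * t i : ℝ) :=
      Finset.measurable_sum _ fun i _ => (measurable_pi_apply i).const_mul _
    exact Complex.measurable_exp.comp
      ((Complex.measurable_ofReal.comp hsum).const_mul Complex.I)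
  have hψnorm : ∀ t, ‖ψ t‖ = 1 := by
    intro t
    have h1 : ψ t = Complex.exp ((∑ i, a i * t i : ℝ) * Complex.I) := by
      show Complex.exp _ = _
      rw [mul_comm]
    rw [h1, Complex.norm_exp_ofReal_mul_I]
  have hψmul : ∀ t s, ψ t * (starRingEnd ℂ) (ψ s) = ψ (t - s) := by
    intro t s
    have h1 : (starRingEnd ℂ) (ψ s)
        = Complex.exp (-(Complex.I * ((∑ i, a i * s i : ℝ) : ℂ))) := by
      show (starRingEnd ℂ) (Complex.exp _) = _
      rw [← Complex.exp_conj]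
      congr 1
      rw [map_mul, Complex.conj_I, Complex.conj_ofReal]
      ring
    show Complex.exp _ * _ = Complex.exp _
    rw [h1, ← Complex.exp_add]
    congr 1
    have h2 : (∑ i, a i * (t - s) i) = (∑ i, a i * t i) - ∑ i, a i * s i := by
      rw [← Finset.sum_sub_distrib]
      apply Finset.sum_congr rfl
      intro i _
      simp only [Pi.sub_apply]
      ring
    rw [h2]
    push_cast
    ring
  -- group facts
  have hu_sub : ∀ t s : Fin d → ℝ, ρ (ρ x₀ (u t)) (u s)⁻¹ = ρ x₀ (u (t - s)) := by
    intro t s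
    have h1 : u (t - s) * u s = u t := by rw [← hu]; congr 1; abel
    calc ρ (ρ x₀ (u t)) (u s)⁻¹ = ρ x₀ (u t * (u s)⁻¹) := (hρ x₀ (u t) (u s)⁻¹).symm
      _ = ρ x₀ (u (t - s)) := by rw [← h1, mul_inv_cancel_right]
  have hgm : Measurable fun t : Fin d → ℝ => ψ t * (f (ρ x₀ (u t)) - c) :=
    hψm.mul (hfm.sub measurable_const)
  have hgb : ∀ t : Fin d → ℝ, ‖ψ t * (f (ρ x₀ (u t)) - c)‖ ≤ M := by
    intro t
    rw [norm_mul, hψnorm, one_mul]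
    exact hfb _
  have hfM : ∀ x, ‖f x‖ ≤ M + ‖c‖ := by
    intro x
    have := norm_add_le (f x - c) c
    rw [sub_add_cancel] at this
    exact this.trans (add_le_add (hfb x) le_rfl)
  -- the convolution identity
  have hconv : ∀ t : Fin d → ℝ, ψ t * (conv (ρ x₀ (u t)) - cH)
      = (H ^ d : ℝ)⁻¹ • ∫ s in Cube d H, ψ (t - s) * (f (ρ x₀ (u (t - s))) - c) := by
    intro t
    have hmeas1 : Measurable fun s : Fin d → ℝ => f (ρ x₀ (u (t - s))) :=
      hfm.comp (measurable_const.sub measurable_id)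
    have hint1 : IntegrableOn (fun s => (starRingEnd ℂ) (ψ s) * f (ρ x₀ (u (t - s))))
        (Cube d H) := by
      apply Integrable.mono' (integrable_const (M + ‖c‖))
      · exact ((continuous_star.measurable.comp hψm).mul hmeas1).aestronglyMeasurable
      · refine ae_of_all _ fun s => ?_
        rw [norm_mul, RCLike.norm_conj, hψnorm, one_mul]
        exact hfM _
    have hint2 : IntegrableOn (fun s => (starRingEnd ℂ) (ψ s) * c) (Cube d H) := by
      apply Integrable.mono' (integrable_const ‖c‖)
      · exact ((continuous_star.measurable.comp hψm).mul measurable_const).aestronglyMeasurable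
      · refine ae_of_all _ fun s => ?_
        rw [norm_mul, RCLike.norm_conj, hψnorm, one_mul]
    have hconv_val : conv (ρ x₀ (u t))
        = (H ^ d : ℝ)⁻¹ • ∫ s in Cube d H, (starRingEnd ℂ) (ψ s) * f (ρ x₀ (u (t - s))) := by
      show ((H ^ d : ℝ)⁻¹ • ∫ s in cube H, (starRingEnd ℂ) (ψ s) * f (ρ (ρ x₀ (u t)) (u s)⁻¹))
        = _
      rw [hcube]
      congr 1
      exact integral_congr_ae (ae_of_all _ fun s => by simp only [hu_sub t s])
    have hcH : cH = (H ^ d : ℝ)⁻¹ • ∫ s in Cube d H, (starRingEnd ℂ) (ψ s) * c := by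
      show ((H ^ d : ℝ)⁻¹ • (∫ s in cube H, (starRingEnd ℂ) (ψ s))) * c = _
      rw [hcube, smul_mul_assoc, ← integral_mul_const]
    rw [hconv_val, hcH, ← smul_sub, ← integral_sub hint1 hint2, mul_smul_comm]
    congr 1
    rw [← integral_const_mul]
    refine integral_congr_ae (ae_of_all _ fun s => ?_)
    show ψ t * ((starRingEnd ℂ) (ψ s) * f (ρ x₀ (u (t - s))) - (starRingEnd ℂ) (ψ s) * c)
      = ψ (t - s) * (f (ρ x₀ (u (t - s))) - c)
    rw [← hψmul t s]
    ring
  -- rewrite μT and μTconv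
  have hμT : μT = (T ^ d : ℝ)⁻¹ • ∫ t in Cube d T, ψ t * (f (ρ x₀ (u t)) - c) := by
    show ((T ^ d : ℝ)⁻¹ • ∫ t in cube T, ψ t * (f (ρ x₀ (u t)) - c)) = _
    rw [hcube]
  have hμTconv : μTconv = (T ^ d : ℝ)⁻¹ • ∫ t in Cube d T,
      (H ^ d : ℝ)⁻¹ • ∫ s in Cube d H, ψ (t - s) * (f (ρ x₀ (u (t - s))) - c) := by
    show ((T ^ d : ℝ)⁻¹ • ∫ t in cube T, ψ t * (conv (ρ x₀ (u t)) - cH)) = _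
    rw [hcube]
    congr 1
    exact integral_congr_ae (ae_of_all _ fun t => hconv t)
  rw [hμT, hμTconv, hcube]
  exact aux_main d hd hT hH hHT (fun t => ψ t * (f (ρ x₀ (u t)) - c)) M hM hgm hgb

end
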